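/- Let G be a (pan, even hole)-free graph and B an ℓ-buoy in G (ℓ ≥ 5) with bags B_0, ..., B_{ℓ-1}. Then for every i, either B_{i-1} ∪ B_i induces a clique or B_i ∪ B_{i+1} induces a clique. -/

import Mathlib

def IsHole {V : Type*} (G : SimpleGraph V) (n : ℕ) (f : ZMod n → V) : Prop :=
  4 ≤ n ∧ Function.Injective f ∧
    ∀ i j : ZMod n, G.Adj (f i) (f j) ↔ (j = i + 1 ∨ i = j + 1)

def HasInducedPan {V : Type*} (G : SimpleGraph V) : Prop :=
  ∃ (n : ℕ) (f : ZMod n → V) (x : V),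
    IsHole G n f ∧ x ∉ Set.range f ∧ ∃! i : ZMod n, G.Adj x (f i)

def HasEvenHole {V : Type*} (G : SimpleGraph V) : Prop :=
  ∃ (n : ℕ) (f : ZMod n → V), IsHole G n f ∧ Even n

namespace Stmt9Aux

structure Ctx {V : Type*} (G : SimpleGraph V) (ℓ : ℕ) (B : ZMod ℓ → Set V) : Prop where
  hl : 5 ≤ ℓ
  hne : ∀ i, (B i).Nonempty
  hcl : ∀ i, G.IsClique (B i)
  hdisj : Pairwise fun i j : ZMod ℓ => Disjoint (B i) (B j)
  hnext : ∀ i, ∀ v ∈ B i, ∃ u ∈ B (i + 1), G.Adj v u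
  hprev : ∀ i, ∀ v ∈ B i, ∃ u ∈ B (i - 1), G.Adj v u
  hfar : ∀ i j : ZMod ℓ, j ≠ i → j ≠ i + 1 → j ≠ i - 1 →
    ∀ v ∈ B i, ∀ u ∈ B j, ¬ G.Adj v u

variable {V : Type*} {G : SimpleGraph V} {ℓ : ℕ} {B : ZMod ℓ → Set V}

theorem Ctx.nz (hC : Ctx G ℓ B) : NeZero ℓ := ⟨by have := hC.hl; omega⟩

theorem Ctx.bag_eq (hC : Ctx G ℓ B) {v : V} {i j : ZMod ℓ}
    (hi : v ∈ B i) (hj : v ∈ B j) : i = j := by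
  by_contra h
  exact Set.disjoint_left.mp (hC.hdisj h) hi hj

theorem Ctx.mem_ne (hC : Ctx G ℓ B) {v u : V} {i j : ZMod ℓ}
    (hi : v ∈ B i) (hj : u ∈ B j) (hij : i ≠ j) : v ≠ u := by
  rintro rfl; exact hij (hC.bag_eq hi hj)

theorem Ctx.adjBag (hC : Ctx G ℓ B) {v u : V} {i j : ZMod ℓ}
    (hi : v ∈ B i) (hj : u ∈ B j) (hadj : G.Adj v u) :
    j = i ∨ j = i + 1 ∨ j = i - 1 := by
  by_contra h
  push_neg at h
  exact hC.hfar i j h.1 h.2.1 h.2.2 v hi u hj hadj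

theorem Ctx.cliqueAdj (hC : Ctx G ℓ B) {v u : V} {i : ZMod ℓ}
    (hi : v ∈ B i) (hj : u ∈ B i) (hne : v ≠ u) : G.Adj v u :=
  hC.hcl i hi hj hne

theorem Ctx.castInj (hC : Ctx G ℓ B) {a b : ℕ} (ha : a < ℓ) (hb : b < ℓ)
    (h : (a : ZMod ℓ) = b) : a = b := by
  haveI := hC.nz
  have h2 := congrArg ZMod.val h
  rwa [ZMod.val_cast_of_lt ha, ZMod.val_cast_of_lt hb] at h2

/-- General hole criterion. -/
theorem Ctx.isHole_of (hC : Ctx G ℓ B) {n : ℕ} (hn : 4 ≤ n)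
    (g : ZMod n → V) (σ : ZMod n → ZMod ℓ)
    (h1 : ∀ t, g t ∈ B (σ t))
    (h2 : ∀ t, G.Adj (g t) (g (t + 1)))
    (h3 : ∀ t t', σ t = σ t' → t = t' ∨ t' = t + 1 ∨ t = t' + 1)
    (h4 : ∀ t t', σ t' = σ t + 1 → t' ≠ t + 1 → t ≠ t' + 1 → ¬ G.Adj (g t) (g t')) :
    IsHole G n g := by
  refine ⟨hn, ?_, ?_⟩
  · intro t t' h
    have hb : σ t = σ t' := hC.bag_eq (h ▸ h1 t) (h1 t')
    rcases h3 t t' hb with h' | h' | h'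
    · exact h'
    · exfalso; have := h2 t; rw [← h', ← h] at this; exact G.irrefl this
    · exfalso; have := h2 t'; rw [← h', h] at this; exact G.irrefl this
  · intro ti tj
    constructor
    · intro hadj
      rcases hC.adjBag (h1 ti) (h1 tj) hadj with hb | hb | hb
      · rcases h3 ti tj hb.symm with h' | h' | h'
        · exact absurd (h' ▸ hadj) (G.irrefl)
        · exact Or.inl h'
        · exact Or.inr h'
      · by_contra hne
        push_neg at hne
        exact h4 ti tj hb hne.1 hne.2 hadj
      · have hb' : σ ti = σ tj + 1 := by rw [hb]; ring
        by_contra hne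
        push_neg at hne
        exact h4 tj ti hb' hne.2 hne.1 hadj.symm
    · rintro (h | h)
      · rw [h]; exact h2 ti
      · rw [h]; exact (h2 tj).symm

theorem Ctx.val_succ (hC : Ctx G ℓ B) {n : ℕ} [NeZero n] (hn : 2 ≤ n) (t : ZMod n) :
    (t + 1).val = (t.val + 1) % n := by
  have h1 : 1 % n = 1 := Nat.mod_eq_of_lt (by omega)
  rw [ZMod.val_add, ZMod.val_one_eq_one_mod, h1]

/-- Shape 1: a hole of length exactly ℓ, one vertex per bag. -/
theorem Ctx.shape1 (hC : Ctx G ℓ B) (i₀ : ZMod ℓ) (c : ℕ → V)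
    (hc : ∀ k, k < ℓ → c k ∈ B (i₀ + (k : ZMod ℓ)))
    (hadj : ∀ k, k + 1 < ℓ → G.Adj (c k) (c (k + 1)))
    (hclose : G.Adj (c (ℓ - 1)) (c 0)) :
    IsHole G ℓ (fun t => c t.val) := by
  haveI := hC.nz
  have hl5 := hC.hl
  refine hC.isHole_of (by omega) _ (fun t => i₀ + ((t.val : ℕ) : ZMod ℓ)) ?_ ?_ ?_ ?_
  · intro t; exact hc t.val (ZMod.val_lt t)
  · intro t
    have hv := ZMod.val_lt t
    have hs : (t + 1).val = (t.val + 1) % ℓ := hC.val_succ (by omega) t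
    by_cases h : t.val + 1 < ℓ
    · rw [hs, Nat.mod_eq_of_lt h]; exact hadj t.val h
    · have he : t.val + 1 = ℓ := by omega
      rw [hs, he, Nat.mod_self]
      have : t.val = ℓ - 1 := by omega
      rw [this]; exact hclose
  · intro t t' h
    have h' : ((t.val : ℕ) : ZMod ℓ) = ((t'.val : ℕ) : ZMod ℓ) := by
      exact add_left_cancel h
    left
    exact ZMod.val_injective ℓ (hC.castInj (ZMod.val_lt t) (ZMod.val_lt t') h')
  · intro t t' h hne1 _
    exfalso
    have h' : ((t'.val : ℕ) : ZMod ℓ) = (((t.val + 1 : ℕ)) : ZMod ℓ) := by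
      push_cast
      rw [add_assoc] at h
      exact add_left_cancel h
    apply hne1
    apply ZMod.val_injective ℓ
    have hv := ZMod.val_lt t
    have hv' := ZMod.val_lt t'
    have hs : (t + 1).val = (t.val + 1) % ℓ := hC.val_succ (by omega) t
    by_cases hlt : t.val + 1 < ℓ
    · rw [hs, Nat.mod_eq_of_lt hlt]
      exact hC.castInj hv' (by omega) h'
    · have he : t.val + 1 = ℓ := by omega
      rw [hs, he, Nat.mod_self]
      rw [he] at h'
      rw [ZMod.natCast_self] at h'
      exact hC.castInj hv' (by omega) (by rw [h']; norm_num)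

/-- Shape 2: a hole of length ℓ+1, one vertex per bag except the bag of `c 0`,
which also contains `c ℓ`. -/
theorem Ctx.shape2 (hC : Ctx G ℓ B) (i₀ : ZMod ℓ) (c : ℕ → V)
    (hc : ∀ k, k ≤ ℓ → c k ∈ B (i₀ + (k : ZMod ℓ)))
    (hadj : ∀ k, k < ℓ → G.Adj (c k) (c (k + 1)))
    (hclose : G.Adj (c ℓ) (c 0))
    (hs1 : ¬ G.Adj (c (ℓ - 1)) (c 0))
    (hs2 : ¬ G.Adj (c ℓ) (c 1)) :
    IsHole G (ℓ + 1) (fun t => c t.val) := by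
  haveI := hC.nz
  haveI : NeZero (ℓ + 1) := ⟨by omega⟩
  have hl5 := hC.hl
  -- basic cast facts
  have castInj := fun {a b : ℕ} (ha : a < ℓ) (hb : b < ℓ) (h : (a : ZMod ℓ) = b) =>
    hC.castInj ha hb h
  have key : ∀ {a b : ℕ}, a ≤ ℓ → b ≤ ℓ → (a : ZMod ℓ) = (b : ZMod ℓ) →
      a = b ∨ (a = 0 ∧ b = ℓ) ∨ (a = ℓ ∧ b = 0) := by
    intro a b ha hb h
    rcases Nat.lt_or_ge a ℓ with ha' | ha'
    · rcases Nat.lt_or_ge b ℓ with hb' | hb'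
      · exact Or.inl (castInj ha' hb' h)
      · have hbl : b = ℓ := by omega
        rw [hbl, ZMod.natCast_self] at h
        have ha0 : a = 0 := castInj ha' (by omega) (by rw [h]; norm_num)
        exact Or.inr (Or.inl ⟨ha0, hbl⟩)
    · have hal : a = ℓ := by omega
      rw [hal, ZMod.natCast_self] at h
      rcases Nat.lt_or_ge b ℓ with hb' | hb'
      · have hb0 : b = 0 := castInj hb' (by omega) (by rw [← h]; norm_num)
        exact Or.inr (Or.inr ⟨hal, hb0⟩)
      · left; omega
  refine hC.isHole_of (by omega) _ (fun t => i₀ + ((t.val : ℕ) : ZMod ℓ)) ?_ ?_ ?_ ?_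
  · intro t
    exact hc t.val (by have := ZMod.val_lt t; omega)
  · intro t
    have hv : t.val < ℓ + 1 := ZMod.val_lt t
    have hs : (t + 1).val = (t.val + 1) % (ℓ + 1) := hC.val_succ (by omega) t
    by_cases h : t.val < ℓ
    · rw [hs, Nat.mod_eq_of_lt (by omega)]; exact hadj t.val h
    · have he : t.val = ℓ := by omega
      rw [hs, he, Nat.mod_self]
      exact hclose
  · intro t t' h
    have hv : t.val ≤ ℓ := by have := ZMod.val_lt t; omega
    have hv' : t'.val ≤ ℓ := by have := ZMod.val_lt t'; omega
    have h' : ((t.val : ℕ) : ZMod ℓ) = ((t'.val : ℕ) : ZMod ℓ) := add_left_cancel h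
    have hs : (t + 1).val = (t.val + 1) % (ℓ + 1) := hC.val_succ (by omega) t
    have hs' : (t' + 1).val = (t'.val + 1) % (ℓ + 1) := hC.val_succ (by omega) t'
    rcases key hv hv' h' with h0 | ⟨h0, h0'⟩ | ⟨h0, h0'⟩
    · exact Or.inl (ZMod.val_injective _ (by omega))
    · -- t.val = 0, t'.val = ℓ : t = t' + 1
      refine Or.inr (Or.inr ?_)
      apply ZMod.val_injective _
      rw [hs', h0', Nat.mod_self, h0]
    · refine Or.inr (Or.inl ?_)
      apply ZMod.val_injective _
      rw [hs, h0, Nat.mod_self, h0']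
  · intro t t' h hne1 hne2
    have hv : t.val ≤ ℓ := by have := ZMod.val_lt t; omega
    have hv' : t'.val ≤ ℓ := by have := ZMod.val_lt t'; omega
    have h' : ((t'.val : ℕ) : ZMod ℓ) = (((t.val + 1 : ℕ)) : ZMod ℓ) := by
      push_cast
      rw [add_assoc] at h
      exact add_left_cancel h
    have hs : (t + 1).val = (t.val + 1) % (ℓ + 1) := hC.val_succ (by omega) t
    have hs' : (t' + 1).val = (t'.val + 1) % (ℓ + 1) := hC.val_succ (by omega) t'
    rcases Nat.lt_or_ge (t.val + 1) ℓ with hlt | hge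
    · -- then t'.val = t.val + 1, contradiction with hne1
      rcases key hv' (by omega) h' with h0 | ⟨h0, h0'⟩ | ⟨h0, h0'⟩
      · exfalso; apply hne1; apply ZMod.val_injective _
        rw [hs, Nat.mod_eq_of_lt (by omega), h0]
      · omega
      · omega
    · rcases Nat.lt_or_ge (t.val) ℓ with hlt2 | hge2
      · -- t.val = ℓ - 1; t'.val ∈ {0, ℓ}
        have he : t.val + 1 = ℓ := by omega
        rw [he] at h'
        rcases key hv' (le_refl ℓ) h' with h0 | ⟨h0, h0'⟩ | ⟨h0, h0'⟩
        · -- t'.val = ℓ : t' = t + 1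
          exfalso; apply hne1; apply ZMod.val_injective _
          rw [hs, he, Nat.mod_eq_of_lt (by omega), h0]
        · -- t'.val = 0 : the skew pair (ℓ-1, 0)
          have ht : t.val = ℓ - 1 := by omega
          intro hadj'
          apply hs1
          rw [ht, h0] at hadj'
          exact hadj'
        · omega
      · -- t.val = ℓ : RHS = cast (ℓ+1) = cast 1, t'.val = 1
        have he : t.val = ℓ := by omega
        have h'' : ((t'.val : ℕ) : ZMod ℓ) = ((1 : ℕ) : ZMod ℓ) := by
          rw [h', he]
          push_cast [ZMod.natCast_self]
          ring
        have ht' : t'.val = 1 := by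
          rcases key hv' (by omega) h'' with h0 | ⟨h0, h0'⟩ | ⟨h0, h0'⟩
          · exact h0
          · omega
          · omega
        intro hadj'
        apply hs2
        rw [he, ht'] at hadj'
        exact hadj'

/-- C4 even hole: two pairs of vertices in adjacent bags. -/
theorem Ctx.c4 (hC : Ctx G ℓ B) (m : ZMod ℓ) {w x y z : V}
    (hw : w ∈ B (m + 1)) (hx : x ∈ B m) (hy : y ∈ B m) (hz : z ∈ B (m + 1))
    (hwx : G.Adj w x) (hxy : G.Adj x y) (hyz : G.Adj y z) (hzw : G.Adj z w)
    (hwy : ¬ G.Adj w y) (hxz : ¬ G.Adj x z) : HasEvenHole G := by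
  have hl5 := hC.hl
  have hm : m + 1 ≠ m := by
    intro h
    have h2 : ((1:ℕ) : ZMod ℓ) = ((0:ℕ) : ZMod ℓ) := by
      have := add_right_cancel (a := (1:ZMod ℓ)) (b := m) (c := 0)
        (by rw [add_comm, zero_add]; exact h)
      exact_mod_cast this
    have := hC.castInj (by omega) (by omega) h2
    omega
  have dwy : w ≠ y := hC.mem_ne hw hy hm
  have dxz : x ≠ z := hC.mem_ne hx hz (Ne.symm hm)
  set f : ZMod 4 → V := fun t => if t = 0 then w else if t = 1 then x else if t = 2 then y else z with hf
  have f0 : f 0 = w := by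
    show (if (0:ZMod 4) = 0 then w else if (0:ZMod 4) = 1 then x else if (0:ZMod 4) = 2 then y else z) = w
    rw [if_pos rfl]
  have f1 : f 1 = x := by
    show (if (1:ZMod 4) = 0 then w else if (1:ZMod 4) = 1 then x else if (1:ZMod 4) = 2 then y else z) = x
    rw [if_neg (by decide), if_pos rfl]
  have f2 : f 2 = y := by
    show (if (2:ZMod 4) = 0 then w else if (2:ZMod 4) = 1 then x else if (2:ZMod 4) = 2 then y else z) = y
    rw [if_neg (by decide), if_neg (by decide), if_pos rfl]
  have f3 : f 3 = z := by
    show (if (3:ZMod 4) = 0 then w else if (3:ZMod 4) = 1 then x else if (3:ZMod 4) = 2 then y else z) = z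
    rw [if_neg (by decide), if_neg (by decide), if_neg (by decide)]
  have cases4 : ∀ t : ZMod 4, t = 0 ∨ t = 1 ∨ t = 2 ∨ t = 3 := by decide
  refine ⟨4, f, ⟨by norm_num, ?_, ?_⟩, by decide⟩
  · intro t t' h
    rcases cases4 t with rfl | rfl | rfl | rfl <;> rcases cases4 t' with rfl | rfl | rfl | rfl <;>
      simp only [f0, f1, f2, f3] at h <;>
      first
        | rfl
        | exact absurd h hwx.ne
        | exact absurd h hwx.ne'
        | exact absurd h hxy.ne
        | exact absurd h hxy.ne'
        | exact absurd h hyz.ne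
        | exact absurd h hyz.ne'
        | exact absurd h hzw.ne
        | exact absurd h hzw.ne'
        | exact absurd h dwy
        | exact absurd h (Ne.symm dwy)
        | exact absurd h dxz
        | exact absurd h (Ne.symm dxz)
  · intro ti tj
    rcases cases4 ti with rfl | rfl | rfl | rfl <;> rcases cases4 tj with rfl | rfl | rfl | rfl <;>
      simp only [f0, f1, f2, f3] <;>
      first
        | exact iff_of_false G.irrefl (by decide)
        | exact iff_of_true hwx (by decide)
        | exact iff_of_true hwx.symm (by decide)
        | exact iff_of_true hxy (by decide)
        | exact iff_of_true hxy.symm (by decide)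
        | exact iff_of_true hyz (by decide)
        | exact iff_of_true hyz.symm (by decide)
        | exact iff_of_true hzw (by decide)
        | exact iff_of_true hzw.symm (by decide)
        | exact iff_of_false hwy (by decide)
        | exact iff_of_false (fun hh => hwy hh.symm) (by decide)
        | exact iff_of_false hxz (by decide)
        | exact iff_of_false (fun hh => hxz hh.symm) (by decide)


theorem Ctx.exists_chain (hC : Ctx G ℓ B) (i₀ : ZMod ℓ) {v₀ : V} (h : v₀ ∈ B i₀) :
    ∃ c : ℕ → V, c 0 = v₀ ∧ (∀ k : ℕ, c k ∈ B (i₀ + (k : ZMod ℓ))) ∧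
      ∀ k, G.Adj (c k) (c (k + 1)) := by
  choose nf h1 h2 using hC.hnext
  let F : (k : ℕ) → {v : V // v ∈ B (i₀ + (k : ZMod ℓ))} := fun k =>
    Nat.rec ⟨v₀, by simpa using h⟩
      (fun k ih => ⟨nf _ ih.1 ih.2, by
        have hmem := h1 _ ih.1 ih.2
        have hcast : i₀ + ((k : ℕ) : ZMod ℓ) + 1 = i₀ + (((k + 1 : ℕ)) : ZMod ℓ) := by
          push_cast; ring
        rwa [hcast] at hmem⟩) k
  exact ⟨fun k => (F k).1, rfl, fun k => (F k).2, fun k => h2 _ (F k).1 (F k).2⟩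

theorem evenHole_absurd {V : Type*} {G : SimpleGraph V} (heven : ¬ HasEvenHole G)
    {n : ℕ} {f : ZMod n → V} (hh : IsHole G n f) (he : Even n) : False :=
  heven ⟨n, f, hh, he⟩

theorem pan_absurd {V : Type*} {G : SimpleGraph V} (hpan : ¬ HasInducedPan G)
    {n : ℕ} {f : ZMod n → V} (hh : IsHole G n f) {x : V} (hx : ∀ t, f t ≠ x)
    {i₀ : ZMod n} (ha : G.Adj x (f i₀)) (hu : ∀ j, G.Adj x (f j) → j = i₀) : False :=
  hpan ⟨n, f, x, hh, fun ⟨t, ht⟩ => hx t ht, i₀, ha, hu⟩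

theorem Ctx.cast_sub (hC : Ctx G ℓ B) (j : ℕ) (hj : j ≤ ℓ) :
    ((ℓ - j : ℕ) : ZMod ℓ) = -(j : ZMod ℓ) := by
  have h : ((ℓ - j : ℕ) + j : ℕ) = ℓ := by omega
  have h2 : ((ℓ - j : ℕ) : ZMod ℓ) + (j : ZMod ℓ) = 0 := by
    rw [← Nat.cast_add, h, ZMod.natCast_self]
  exact eq_neg_of_add_eq_zero_left h2

/-- The even-length case is impossible (even-hole-freeness suffices). -/
theorem Ctx.evenCase (hC : Ctx G ℓ B) (heven : ¬ HasEvenHole G) (he : Even ℓ) : False := by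
  have hl5 := hC.hl
  haveI := hC.nz
  obtain ⟨x₀, hx₀⟩ := hC.hne 0
  obtain ⟨x, hx0, hxm, hxadj⟩ := hC.exists_chain 0 hx₀
  have hxm' : ∀ k : ℕ, x k ∈ B ((k : ZMod ℓ)) := by intro k; simpa using hxm k
  -- no ℓ-window of the spiral closes up (else an even ℓ-hole)
  have noClose : ∀ k, ¬ G.Adj (x (k + (ℓ - 1))) (x k) := by
    intro k hadj
    refine evenHole_absurd heven (hC.shape1 ((k : ℕ) : ZMod ℓ) (fun m => x (k + m)) ?_ ?_ ?_) he
    · intro mm _; have := hxm' (k + mm); rwa [Nat.cast_add] at this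
    · intro mm _; exact hxadj (k + mm)
    · exact hadj
  -- spiral same-bag adjacency
  have P2 : ∀ k, G.Adj (x k) (x (k + ℓ)) := by
    intro k
    have hne : x k ≠ x (k + ℓ) := by
      intro hh
      apply noClose k
      have hadj := hxadj (k + (ℓ - 1))
      have e1 : k + (ℓ - 1) + 1 = k + ℓ := by omega
      rw [e1, ← hh] at hadj
      exact hadj
    refine hC.cliqueAdj (hxm' k) ?_ hne
    have := hxm' (k + ℓ)
    rwa [show (((k + ℓ : ℕ)) : ZMod ℓ) = ((k : ℕ) : ZMod ℓ) from by
      push_cast [ZMod.natCast_self]; ring] at this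
  -- closing edge x (ℓ-1) -- x (2ℓ)
  have step1 : G.Adj (x (ℓ - 1)) (x (2 * ℓ)) := by
    by_contra hne
    have e1 : (ℓ - 1) + ℓ = 2 * ℓ - 1 := by omega
    have e2 : (2 * ℓ - 1) + 1 = 2 * ℓ := by omega
    have e3 : ℓ + (ℓ - 1) = 2 * ℓ - 1 := by omega
    have e4 : ℓ + ℓ = 2 * ℓ := by omega
    have hP2a := P2 (ℓ - 1); rw [e1] at hP2a
    have hP2b := P2 ℓ; rw [e4] at hP2b
    have hch := hxadj (2 * ℓ - 1); rw [e2] at hch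
    have hnc := noClose ℓ; rw [e3] at hnc
    refine heven (hC.c4 (((ℓ - 1 : ℕ)) : ZMod ℓ)
        (w := x (2 * ℓ)) (x := x (2 * ℓ - 1)) (y := x (ℓ - 1)) (z := x ℓ)
        (by
          have := hxm' (2 * ℓ)
          rwa [show (((2 * ℓ : ℕ)) : ZMod ℓ) = ((ℓ - 1 : ℕ) : ZMod ℓ) + 1 from by
            rw [hC.cast_sub 1 (by omega)]
            push_cast [ZMod.natCast_self]; ring] at this)
        (by
          have := hxm' (2 * ℓ - 1)
          rwa [show (((2 * ℓ - 1 : ℕ)) : ZMod ℓ) = ((ℓ - 1 : ℕ) : ZMod ℓ) from by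
            rw [hC.cast_sub 1 (by omega), show (2 * ℓ - 1 : ℕ) = ℓ + (ℓ - 1) from by omega]
            push_cast [ZMod.natCast_self, hC.cast_sub 1 (by omega)]
            ring] at this)
        (hxm' (ℓ - 1))
        (by
          have := hxm' ℓ
          rwa [show ((ℓ : ℕ) : ZMod ℓ) = ((ℓ - 1 : ℕ) : ZMod ℓ) + 1 from by
            rw [hC.cast_sub 1 (by omega), ZMod.natCast_self]; ring] at this)
        hch.symm hP2a.symm (by
          have := hxadj (ℓ - 1)
          rwa [show (ℓ - 1) + 1 = ℓ from by omega] at this)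
        hP2b
        (fun hh => hne hh.symm) hnc)
  -- the non-edge x 2 -- x (2ℓ+1)
  have step2 : ¬ G.Adj (x 2) (x (2 * ℓ + 1)) := by
    intro hadj
    have e1 : (ℓ + 1) + ℓ = 2 * ℓ + 1 := by omega
    have e2 : 2 + ℓ = ℓ + 2 := by omega
    have e3 : 2 + (ℓ - 1) = ℓ + 1 := by omega
    have e4 : (ℓ + 2) + (ℓ - 1) = 2 * ℓ + 1 := by omega
    have hP2a := P2 (ℓ + 1); rw [e1] at hP2a
    have hP2b := P2 2; rw [e2] at hP2b
    have hnc1 := noClose 2; rw [e3] at hnc1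
    have hnc2 := noClose (ℓ + 2); rw [e4] at hnc2
    refine heven (hC.c4 ((1 : ℕ) : ZMod ℓ)
      (w := x 2) (x := x (2 * ℓ + 1)) (y := x (ℓ + 1)) (z := x (ℓ + 2))
      (by
        have := hxm' 2
        rwa [show ((2 : ℕ) : ZMod ℓ) = ((1 : ℕ) : ZMod ℓ) + 1 from by push_cast; ring] at this)
      (by
        have := hxm' (2 * ℓ + 1)
        rwa [show (((2 * ℓ + 1 : ℕ)) : ZMod ℓ) = ((1 : ℕ) : ZMod ℓ) from by
          push_cast [ZMod.natCast_self]; ring] at this)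
      (by
        have := hxm' (ℓ + 1)
        rwa [show (((ℓ + 1 : ℕ)) : ZMod ℓ) = ((1 : ℕ) : ZMod ℓ) from by
          push_cast [ZMod.natCast_self]; ring] at this)
      (by
        have := hxm' (ℓ + 2)
        rwa [show (((ℓ + 2 : ℕ)) : ZMod ℓ) = ((1 : ℕ) : ZMod ℓ) + 1 from by
          push_cast [ZMod.natCast_self]; ring] at this)
      hadj hP2a.symm (hxadj (ℓ + 1)) hP2b.symm
      (fun hh => hnc1 hh.symm) hnc2)
  -- assemble the (ℓ+2)-hole
  set c : ℕ → V := fun k =>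
    if k = 0 then x (2 * ℓ) else if k = 1 then x (2 * ℓ + 1) else
    if k = 2 then x (ℓ + 1) else if k = 3 then x (ℓ + 2) else x (k - 2) with hcdef
  set u : ℕ → ℕ := fun k => if k ≤ 1 then k else if k ≤ 3 then k - 1 else k - 2 with hudef
  have c0 : c 0 = x (2 * ℓ) := by simp [hcdef]
  have c1 : c 1 = x (2 * ℓ + 1) := by simp [hcdef]
  have c2 : c 2 = x (ℓ + 1) := by simp [hcdef]
  have c3 : c 3 = x (ℓ + 2) := by simp [hcdef]
  have cge : ∀ k, 4 ≤ k → c k = x (k - 2) := by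
    intro k hk
    simp only [hcdef]
    rw [if_neg (by omega), if_neg (by omega), if_neg (by omega), if_neg (by omega)]
  have ubound : ∀ k, k ≤ ℓ + 1 → u k < ℓ := by
    intro k hk; simp only [hudef]; split_ifs <;> omega
  have hmemc : ∀ k, k ≤ ℓ + 1 → c k ∈ B ((u k : ℕ) : ZMod ℓ) := by
    intro k hk
    have h4 : (4 ≤ k ∧ k ≤ ℓ + 1) ∨ k = 0 ∨ k = 1 ∨ k = 2 ∨ k = 3 := by omega
    rcases h4 with ⟨h4a, h4b⟩ | rfl | rfl | rfl | rfl
    · rw [cge k h4a]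
      have hu : u k = k - 2 := by simp only [hudef]; rw [if_neg (by omega), if_neg (by omega)]
      rw [hu]; exact hxm' (k - 2)
    · rw [c0]
      have hu : u 0 = 0 := by simp [hudef]
      rw [hu]
      have := hxm' (2 * ℓ)
      rwa [show (((2 * ℓ : ℕ)) : ZMod ℓ) = ((0 : ℕ) : ZMod ℓ) from by
        push_cast [ZMod.natCast_self]; ring] at this
    · rw [c1]
      have hu : u 1 = 1 := by simp [hudef]
      rw [hu]
      have := hxm' (2 * ℓ + 1)
      rwa [show (((2 * ℓ + 1 : ℕ)) : ZMod ℓ) = ((1 : ℕ) : ZMod ℓ) from by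
        push_cast [ZMod.natCast_self]; ring] at this
    · rw [c2]
      have hu : u 2 = 1 := by simp [hudef]
      rw [hu]
      have := hxm' (ℓ + 1)
      rwa [show (((ℓ + 1 : ℕ)) : ZMod ℓ) = ((1 : ℕ) : ZMod ℓ) from by
        push_cast [ZMod.natCast_self]; ring] at this
    · rw [c3]
      have hu : u 3 = 2 := by simp [hudef]
      rw [hu]
      have := hxm' (ℓ + 2)
      rwa [show (((ℓ + 2 : ℕ)) : ZMod ℓ) = ((2 : ℕ) : ZMod ℓ) from by
        push_cast [ZMod.natCast_self]; ring] at this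
  haveI : NeZero (ℓ + 2) := ⟨by omega⟩
  refine heven ⟨ℓ + 2, fun t => c t.val,
    hC.isHole_of (by omega) _ (fun t => ((u t.val : ℕ) : ZMod ℓ)) ?_ ?_ ?_ ?_,
    by obtain ⟨r, hr⟩ := he; exact ⟨r + 1, by omega⟩⟩
  · intro t
    exact hmemc t.val (by have := ZMod.val_lt t; omega)
  · intro t
    have hv : t.val < ℓ + 2 := ZMod.val_lt t
    have hs : (t + 1).val = (t.val + 1) % (ℓ + 2) := hC.val_succ (by omega) t
    rcases Nat.lt_or_ge t.val (ℓ + 1) with hlt | hge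
    · rw [hs, Nat.mod_eq_of_lt (by omega)]
      have h5 : (4 ≤ t.val ∧ t.val + 1 ≤ ℓ + 1) ∨ t.val = 0 ∨ t.val = 1 ∨ t.val = 2 ∨ t.val = 3 := by
        omega
      rcases h5 with ⟨h5a, h5b⟩ | h0 | h0 | h0 | h0
      · rw [cge _ h5a, cge _ (by omega)]
        have e : t.val - 2 + 1 = t.val + 1 - 2 := by omega
        rw [← e]
        exact hxadj (t.val - 2)
      · rw [h0, c0, c1]; exact hxadj (2 * ℓ)
      · rw [h0, c1, c2]
        have := P2 (ℓ + 1)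
        rw [show (ℓ + 1) + ℓ = 2 * ℓ + 1 from by omega] at this
        exact this.symm
      · rw [h0, c2, c3]; exact hxadj (ℓ + 1)
      · rw [h0, c3]
        rw [show (3 : ℕ) + 1 = 4 from rfl, cge 4 (by omega)]
        have := P2 2
        rw [show 2 + ℓ = ℓ + 2 from by omega] at this
        exact this.symm
    · have he1 : t.val = ℓ + 1 := by omega
      rw [hs, he1, show (ℓ + 1 + 1) % (ℓ + 2) = 0 from Nat.mod_self (ℓ + 2)]
      rw [c0, cge (ℓ + 1) (by omega), show ℓ + 1 - 2 = ℓ - 1 from by omega]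
      exact step1
  · intro t t' h
    have hv : t.val < ℓ + 2 := ZMod.val_lt t
    have hv' : t'.val < ℓ + 2 := ZMod.val_lt t'
    have hu : u t.val = u t'.val :=
      hC.castInj (ubound _ (by omega)) (ubound _ (by omega)) h
    have hs : (t + 1).val = (t.val + 1) % (ℓ + 2) := hC.val_succ (by omega) t
    have hs' : (t' + 1).val = (t'.val + 1) % (ℓ + 2) := hC.val_succ (by omega) t'
    have hcases : t.val = t'.val ∨ (t.val = 1 ∧ t'.val = 2) ∨ (t.val = 2 ∧ t'.val = 1) ∨
        (t.val = 3 ∧ t'.val = 4) ∨ (t.val = 4 ∧ t'.val = 3) := by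
      simp only [hudef] at hu
      split_ifs at hu <;> omega
    rcases hcases with h0 | ⟨ha, hb⟩ | ⟨ha, hb⟩ | ⟨ha, hb⟩ | ⟨ha, hb⟩
    · exact Or.inl (ZMod.val_injective _ h0)
    · refine Or.inr (Or.inl (ZMod.val_injective _ ?_))
      rw [hs, Nat.mod_eq_of_lt (by omega)]; omega
    · refine Or.inr (Or.inr (ZMod.val_injective _ ?_))
      rw [hs', Nat.mod_eq_of_lt (by omega)]; omega
    · refine Or.inr (Or.inl (ZMod.val_injective _ ?_))
      rw [hs, Nat.mod_eq_of_lt (by omega)]; omega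
    · refine Or.inr (Or.inr (ZMod.val_injective _ ?_))
      rw [hs', Nat.mod_eq_of_lt (by omega)]; omega
  · intro t t' h hne1 hne2
    have hv : t.val < ℓ + 2 := ZMod.val_lt t
    have hv' : t'.val < ℓ + 2 := ZMod.val_lt t'
    have hs : (t + 1).val = (t.val + 1) % (ℓ + 2) := hC.val_succ (by omega) t
    have hs' : (t' + 1).val = (t'.val + 1) % (ℓ + 2) := hC.val_succ (by omega) t'
    have hub := ubound t.val (by omega)
    have hub' := ubound t'.val (by omega)
    have hb0 : ((u t'.val : ℕ) : ZMod ℓ) = ((u t.val : ℕ) : ZMod ℓ) + 1 := h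
    have h' : ((u t'.val : ℕ) : ZMod ℓ) = (((u t.val + 1 : ℕ)) : ZMod ℓ) := by
      rw [hb0]; push_cast; ring
    rcases Nat.lt_or_ge (u t.val + 1) ℓ with hlt | hge
    · have hu : u t'.val = u t.val + 1 := hC.castInj hub' (by omega) h'
      -- enumerate
      have hcases : (t'.val = t.val + 1) ∨ (t.val = 0 ∧ t'.val = 2) ∨ (t.val = 1 ∧ t'.val = 3) ∨
          (t.val = 1 ∧ t'.val = 4) ∨ (t.val = 2 ∧ t'.val = 4) ∨ (t.val = 3 ∧ t'.val = 5) := by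
        simp only [hudef] at hu
        split_ifs at hu <;> omega
      rcases hcases with h0 | ⟨ha, hb⟩ | ⟨ha, hb⟩ | ⟨ha, hb⟩ | ⟨ha, hb⟩ | ⟨ha, hb⟩
      · exact absurd (ZMod.val_injective _ (by rw [hs, Nat.mod_eq_of_lt (by omega), h0])) hne1
      · -- pair (0,2): ¬ Adj (x (2ℓ)) (x (ℓ+1))
        rw [ha, hb, c0, c2]
        have := noClose (ℓ + 1)
        rwa [show (ℓ + 1) + (ℓ - 1) = 2 * ℓ from by omega] at this
      · -- (1,3): ¬ Adj (x (2ℓ+1)) (x (ℓ+2))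
        rw [ha, hb, c1, c3]
        have := noClose (ℓ + 2)
        rwa [show (ℓ + 2) + (ℓ - 1) = 2 * ℓ + 1 from by omega] at this
      · -- (1,4): ¬ Adj (x (2ℓ+1)) (x 2)
        rw [ha, hb, c1, cge 4 (by omega)]
        exact fun hh => step2 hh.symm
      · -- (2,4): ¬ Adj (x (ℓ+1)) (x 2)
        rw [ha, hb, c2, cge 4 (by omega)]
        have := noClose 2
        rwa [show 2 + (ℓ - 1) = ℓ + 1 from by omega] at this
      · -- (3,5): ¬ Adj (x (ℓ+2)) (x 3)
        rw [ha, hb, c3, cge 5 (by omega)]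
        have := noClose 3
        rwa [show 3 + (ℓ - 1) = ℓ + 2 from by omega] at this
    · -- u t.val = ℓ - 1, so t.val = ℓ+1; u t'.val = 0 so t'.val = 0 : wrap, consecutive
      exfalso
      have hut : u t.val = ℓ - 1 := by omega
      have ht : t.val = ℓ + 1 := by
        simp only [hudef] at hut
        split_ifs at hut <;> omega
      have h'' : ((u t'.val : ℕ) : ZMod ℓ) = ((0 : ℕ) : ZMod ℓ) := by
        rw [h', show u t.val + 1 = ℓ from by omega, ZMod.natCast_self]
        norm_num
      have hu0 : u t'.val = 0 := hC.castInj hub' (by omega) h''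
      have ht' : t'.val = 0 := by
        simp only [hudef] at hu0
        split_ifs at hu0 <;> omega
      apply hne1
      apply ZMod.val_injective
      rw [hs, ht, ht', show (ℓ + 1 + 1) % (ℓ + 2) = 0 from Nat.mod_self (ℓ + 2)]

theorem Ctx.notInRange (hC : Ctx G ℓ B) {i : ZMod ℓ} {x : V} {m : ℕ} (hm : m < ℓ)
    (hx : x ∈ B (i + (m : ZMod ℓ))) {c : ℕ → V}
    (hc : ∀ k, k < ℓ → c k ∈ B (i + (k : ZMod ℓ))) (hne : c m ≠ x) :
    ∀ t : ZMod ℓ, c t.val ≠ x := by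
  haveI := hC.nz
  intro t heq
  have hk := ZMod.val_lt t
  by_cases h : t.val = m
  · rw [h] at heq; exact hne heq
  · refine hC.mem_ne (hc t.val hk) hx ?_ heq
    intro hbag
    exact h (hC.castInj hk hm (add_left_cancel hbag))

theorem Ctx.pan_shape1 (hC : Ctx G ℓ B) (hpan : ¬ HasInducedPan G) {i : ZMod ℓ} {c : ℕ → V}
    (hole : IsHole G ℓ (fun t => c t.val))
    (hc : ∀ k, k < ℓ → c k ∈ B (i + (k : ZMod ℓ)))
    {x : V} {m : ℕ} (hm : m < ℓ) (hx : x ∈ B (i + (m : ZMod ℓ)))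
    {k₀ : ℕ} (hk₀ : k₀ < ℓ) (hadj : G.Adj x (c k₀)) (hnem : c m ≠ x)
    (huniq : ∀ k, k < ℓ → G.Adj x (c k) → k = k₀) : False := by
  haveI := hC.nz
  refine pan_absurd hpan hole (x := x) (hC.notInRange hm hx hc hnem)
    (i₀ := ((k₀ : ℕ) : ZMod ℓ)) ?_ ?_
  · show G.Adj x (c ((k₀ : ℕ) : ZMod ℓ).val)
    rwa [ZMod.val_cast_of_lt hk₀]
  · intro j hj
    have := huniq j.val (ZMod.val_lt j) hj
    apply ZMod.val_injective
    rw [this, ZMod.val_cast_of_lt hk₀]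

/-- index classification of a neighbor of `x ∈ B (i + m)` among bag-indexed vertices. -/
theorem Ctx.bagIndex (hC : Ctx G ℓ B) {i : ZMod ℓ} {x : V} {m : ℕ} (hm : m < ℓ)
    (hx : x ∈ B (i + (m : ZMod ℓ))) {u : V} {k : ℕ} (hk : k < ℓ)
    (hu : u ∈ B (i + (k : ZMod ℓ))) (hadj : G.Adj x u) :
    k = m ∨ k = (m + 1) % ℓ ∨ k = (m + ℓ - 1) % ℓ := by
  haveI := hC.nz
  have hmod : ∀ a : ℕ, (((a % ℓ : ℕ)) : ZMod ℓ) = ((a : ℕ) : ZMod ℓ) := by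
    intro a; exact_mod_cast ZMod.natCast_mod a ℓ
  rcases hC.adjBag hx hu hadj with h | h | h
  · left
    exact hC.castInj hk hm (add_left_cancel h)
  · right; left
    have h' : ((k : ℕ) : ZMod ℓ) = (((m + 1 : ℕ)) : ZMod ℓ) := by
      push_cast
      rw [add_assoc] at h
      exact add_left_cancel h
    refine hC.castInj hk (Nat.mod_lt _ (by omega)) ?_
    rw [hmod (m + 1), h']
  · right; right
    have h' : ((k : ℕ) : ZMod ℓ) = (((m + ℓ - 1 : ℕ)) : ZMod ℓ) := by
      have e1 : (m + ℓ - 1 : ℕ) = m + (ℓ - 1) := by omega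
      rw [e1, Nat.cast_add, hC.cast_sub 1 (by omega),
        show ((1 : ℕ) : ZMod ℓ) = 1 from by push_cast; ring]
      rw [sub_eq_add_neg, add_assoc] at h
      exact add_left_cancel h
    refine hC.castInj hk (Nat.mod_lt _ (by omega)) ?_
    rw [hmod (m + ℓ - 1), h']

/-- The main "vertex lemma": a vertex with non-neighbours on both sides is impossible. -/
theorem Ctx.lemmaV (hC : Ctx G ℓ B) (hpan : ¬ HasInducedPan G) (heven : ¬ HasEvenHole G)
    (hodd : Odd ℓ) {i : ZMod ℓ} {a b d : V}
    (ha : a ∈ B (i - 1)) (hb : b ∈ B i) (hd : d ∈ B (i + 1))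
    (nab : ¬ G.Adj a b) (nbd : ¬ G.Adj b d) : False := by
  have hl5 := hC.hl
  haveI := hC.nz
  have hpred : ∀ j : ZMod ℓ, j + ((ℓ - 1 : ℕ) : ZMod ℓ) = j - 1 := by
    intro j; rw [hC.cast_sub 1 (by omega)]; ring
  have hcast1 : ((1 : ℕ) : ZMod ℓ) = 1 := by push_cast; ring
  obtain ⟨cb, hcb0, hcbm, hcbadj⟩ := hC.exists_chain i hb
  obtain ⟨a', ha'm, ha'adj⟩ := hC.hprev i b hb
  have hp1 : G.Adj b (cb 1) := by have := hcbadj 0; rwa [hcb0] at this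
  have hd_p1 : cb 1 ≠ d := by rintro rfl; exact nbd hp1
  have hp1m : cb 1 ∈ B (i + 1) := by have := hcbm 1; rwa [hcast1] at this
  by_cases hcase : ∃ ρ ∈ B (i - 1), G.Adj ρ (cb (ℓ - 2)) ∧ G.Adj ρ b
  · -- case (i)
    obtain ⟨ρ, hρm, hρc, hρb⟩ := hcase
    set c1 : ℕ → V := fun k => if k = ℓ - 1 then ρ else cb k with hc1def
    have c1v : ∀ k, k ≠ ℓ - 1 → c1 k = cb k := by
      intro k hk; simp only [hc1def]; split_ifs <;> first | rfl | (exact False.elim ‹False›) | (exfalso; omega)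
    have c1l : c1 (ℓ - 1) = ρ := by simp only [hc1def]; split_ifs <;> first | rfl | (exact False.elim ‹False›) | (exfalso; omega)
    have hc1 : ∀ k, k < ℓ → c1 k ∈ B (i + (k : ZMod ℓ)) := by
      intro k hk
      by_cases h : k = ℓ - 1
      · rw [h, c1l, show (((ℓ - 1 : ℕ)) : ZMod ℓ) = ((ℓ - 1 : ℕ) : ZMod ℓ) from rfl]
        rw [hpred i]; exact hρm
      · rw [c1v k h]; exact hcbm k
    have hadj1 : ∀ k, k + 1 < ℓ → G.Adj (c1 k) (c1 (k + 1)) := by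
      intro k hk
      by_cases h : k + 1 = ℓ - 1
      · rw [c1v k (by omega), h, c1l, show k = ℓ - 2 from by omega]
        exact hρc.symm
      · rw [c1v k (by omega), c1v (k + 1) h]
        exact hcbadj k
    have hclose1 : G.Adj (c1 (ℓ - 1)) (c1 0) := by
      rw [c1l, c1v 0 (by omega), hcb0]; exact hρb
    have H1 : IsHole G ℓ (fun t => c1 t.val) := hC.shape1 i c1 hc1 hadj1 hclose1
    by_cases hdp2 : G.Adj d (cb 2)
    · by_cases hap : G.Adj a (cb (ℓ - 2))
      · -- closing through z / z'
        obtain ⟨z, hzm, hzadj⟩ := hC.hprev (i + 1) d hd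
        have hzm' : z ∈ B i := by rwa [add_sub_cancel_right] at hzm
        have hzb : z ≠ b := by rintro rfl; exact nbd hzadj.symm
        by_cases hza : G.Adj z a
        · -- hole K and pan at b
          set c2 : ℕ → V := fun k =>
            if k = 0 then z else if k = 1 then d else if k = ℓ - 1 then a else cb k with hc2def
          have c2v0 : c2 0 = z := by simp only [hc2def]; split_ifs <;> first | rfl | (exact False.elim ‹False›) | (exfalso; omega)
          have c2v1 : c2 1 = d := by
            simp only [hc2def]; split_ifs <;> first | rfl | (exact False.elim ‹False›) | (exfalso; omega)
          have c2vl : c2 (ℓ - 1) = a := by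
            simp only [hc2def]; split_ifs <;> first | rfl | (exact False.elim ‹False›) | (exfalso; omega)
          have c2v : ∀ k, 2 ≤ k → k ≤ ℓ - 2 → c2 k = cb k := by
            intro k h1 h2
            simp only [hc2def]; split_ifs <;> first | rfl | (exact False.elim ‹False›) | (exfalso; omega)
          have hc2 : ∀ k, k < ℓ → c2 k ∈ B (i + (k : ZMod ℓ)) := by
            intro k hk
            have h4 : k = 0 ∨ k = 1 ∨ (2 ≤ k ∧ k ≤ ℓ - 2) ∨ k = ℓ - 1 := by omega
            rcases h4 with rfl | rfl | ⟨h1, h2⟩ | rfl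
            · rw [c2v0]; simpa using hzm'
            · rw [c2v1, hcast1]; exact hd
            · rw [c2v k h1 h2]; exact hcbm k
            · rw [c2vl, hpred i]; exact ha
          have hadj2 : ∀ k, k + 1 < ℓ → G.Adj (c2 k) (c2 (k + 1)) := by
            intro k hk
            have h4 : k = 0 ∨ k = 1 ∨ (2 ≤ k ∧ k + 1 ≤ ℓ - 2) ∨ k = ℓ - 2 := by omega
            rcases h4 with rfl | rfl | ⟨h1, h2⟩ | rfl
            · rw [c2v0, c2v1]; exact hzadj.symm
            · rw [c2v1, c2v 2 (by omega) (by omega)]; exact hdp2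
            · rw [c2v k h1 (by omega), c2v (k + 1) (by omega) h2]; exact hcbadj k
            · rw [c2v (ℓ - 2) (by omega) (by omega), show ℓ - 2 + 1 = ℓ - 1 from by omega, c2vl]
              exact hap.symm
          have hclose2 : G.Adj (c2 (ℓ - 1)) (c2 0) := by
            rw [c2vl, c2v0]; exact hza.symm
          have H2 : IsHole G ℓ (fun t => c2 t.val) := hC.shape1 i c2 hc2 hadj2 hclose2
          refine hC.pan_shape1 hpan H2 hc2 (m := 0) (by omega)
            (by simpa using hb) (k₀ := 0) (by omega) ?_ ?_ ?_
          · rw [c2v0]; exact hC.cliqueAdj hb hzm' (Ne.symm hzb)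
          · rw [c2v0]; exact hzb
          · intro k hk hadjk
            rcases hC.bagIndex (m := 0) (by omega) (by simpa using hb) hk (hc2 k hk) hadjk
              with h | h | h
            · exact h
            · exfalso
              rw [Nat.mod_eq_of_lt (by omega)] at h
              have h2 : k = 1 := by omega
              rw [h2, c2v1] at hadjk
              exact nbd hadjk
            · exfalso
              rw [Nat.mod_eq_of_lt (by omega)] at h
              have h2 : k = ℓ - 1 := by omega
              rw [h2, c2vl] at hadjk
              exact nab hadjk.symm
        · -- z not adjacent to a
          obtain ⟨z', hz'm, hz'adj⟩ := hC.hnext (i - 1) a ha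
          have hz'm' : z' ∈ B i := by rwa [sub_add_cancel] at hz'm
          have hz'z : z' ≠ z := by rintro rfl; exact hza hz'adj.symm
          have hz'b : z' ≠ b := by rintro rfl; exact nab hz'adj
          by_cases hz'd : G.Adj z' d
          · -- hole K' and pan at b
            set c3 : ℕ → V := fun k =>
              if k = 0 then z' else if k = 1 then d else if k = ℓ - 1 then a else cb k with hc3def
            have c3v0 : c3 0 = z' := by simp only [hc3def]; split_ifs <;> first | rfl | (exact False.elim ‹False›) | (exfalso; omega)
            have c3v1 : c3 1 = d := by
              simp only [hc3def]; split_ifs <;> first | rfl | (exact False.elim ‹False›) | (exfalso; omega)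
            have c3vl : c3 (ℓ - 1) = a := by
              simp only [hc3def]; split_ifs <;> first | rfl | (exact False.elim ‹False›) | (exfalso; omega)
            have c3v : ∀ k, 2 ≤ k → k ≤ ℓ - 2 → c3 k = cb k := by
              intro k h1 h2
              simp only [hc3def]; split_ifs <;> first | rfl | (exact False.elim ‹False›) | (exfalso; omega)
            have hc3 : ∀ k, k < ℓ → c3 k ∈ B (i + (k : ZMod ℓ)) := by
              intro k hk
              have h4 : k = 0 ∨ k = 1 ∨ (2 ≤ k ∧ k ≤ ℓ - 2) ∨ k = ℓ - 1 := by omega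
              rcases h4 with rfl | rfl | ⟨h1, h2⟩ | rfl
              · rw [c3v0]; simpa using hz'm'
              · rw [c3v1, hcast1]; exact hd
              · rw [c3v k h1 h2]; exact hcbm k
              · rw [c3vl, hpred i]; exact ha
            have hadj3 : ∀ k, k + 1 < ℓ → G.Adj (c3 k) (c3 (k + 1)) := by
              intro k hk
              have h4 : k = 0 ∨ k = 1 ∨ (2 ≤ k ∧ k + 1 ≤ ℓ - 2) ∨ k = ℓ - 2 := by omega
              rcases h4 with rfl | rfl | ⟨h1, h2⟩ | rfl
              · rw [c3v0, c3v1]; exact hz'd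
              · rw [c3v1, c3v 2 (by omega) (by omega)]; exact hdp2
              · rw [c3v k h1 (by omega), c3v (k + 1) (by omega) h2]; exact hcbadj k
              · rw [c3v (ℓ - 2) (by omega) (by omega), show ℓ - 2 + 1 = ℓ - 1 from by omega,
                  c3vl]
                exact hap.symm
            have hclose3 : G.Adj (c3 (ℓ - 1)) (c3 0) := by
              rw [c3vl, c3v0]; exact hz'adj
            have H3 : IsHole G ℓ (fun t => c3 t.val) := hC.shape1 i c3 hc3 hadj3 hclose3
            refine hC.pan_shape1 hpan H3 hc3 (m := 0) (by omega)
              (by simpa using hb) (k₀ := 0) (by omega) ?_ ?_ ?_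
            · rw [c3v0]; exact hC.cliqueAdj hb hz'm' (Ne.symm hz'b)
            · rw [c3v0]; exact hz'b
            · intro k hk hadjk
              rcases hC.bagIndex (m := 0) (by omega) (by simpa using hb) hk (hc3 k hk) hadjk
                with h | h | h
              · exact h
              · exfalso
                rw [Nat.mod_eq_of_lt (by omega)] at h
                have h2 : k = 1 := by omega
                rw [h2, c3v1] at hadjk
                exact nbd hadjk
              · exfalso
                rw [Nat.mod_eq_of_lt (by omega)] at h
                have h2 : k = ℓ - 1 := by omega
                rw [h2, c3vl] at hadjk
                exact nab hadjk.symm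
          · -- K'' : shape2 even hole of length ℓ+1
            set c4 : ℕ → V := fun k =>
              if k = 0 then z else if k = 1 then d else if k = ℓ - 1 then a else
              if k = ℓ then z' else cb k with hc4def
            have c4v0 : c4 0 = z := by simp only [hc4def]; split_ifs <;> first | rfl | (exact False.elim ‹False›) | (exfalso; omega)
            have c4v1 : c4 1 = d := by
              simp only [hc4def]; split_ifs <;> first | rfl | (exact False.elim ‹False›) | (exfalso; omega)
            have c4vl1 : c4 (ℓ - 1) = a := by
              simp only [hc4def]; split_ifs <;> first | rfl | (exact False.elim ‹False›) | (exfalso; omega)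
            have c4vl : c4 ℓ = z' := by
              simp only [hc4def]
              split_ifs <;> first | rfl | (exact False.elim ‹False›) | (exfalso; omega)
            have c4v : ∀ k, 2 ≤ k → k ≤ ℓ - 2 → c4 k = cb k := by
              intro k h1 h2
              simp only [hc4def]
              split_ifs <;> first | rfl | (exact False.elim ‹False›) | (exfalso; omega)
            have hc4 : ∀ k, k ≤ ℓ → c4 k ∈ B (i + (k : ZMod ℓ)) := by
              intro k hk
              have h4 : k = 0 ∨ k = 1 ∨ (2 ≤ k ∧ k ≤ ℓ - 2) ∨ k = ℓ - 1 ∨ k = ℓ := by omega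
              rcases h4 with rfl | rfl | ⟨h1, h2⟩ | rfl | rfl
              · rw [c4v0]; simpa using hzm'
              · rw [c4v1, hcast1]; exact hd
              · rw [c4v k h1 h2]; exact hcbm k
              · rw [c4vl1, hpred i]; exact ha
              · rw [c4vl, ZMod.natCast_self, add_zero]; exact hz'm'
            have hadj4 : ∀ k, k < ℓ → G.Adj (c4 k) (c4 (k + 1)) := by
              intro k hk
              have h4 : k = 0 ∨ k = 1 ∨ (2 ≤ k ∧ k + 1 ≤ ℓ - 2) ∨ k = ℓ - 2 ∨ k = ℓ - 1 := by
                omega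
              rcases h4 with rfl | rfl | ⟨h1, h2⟩ | rfl | rfl
              · rw [c4v0, c4v1]; exact hzadj.symm
              · rw [c4v1, c4v 2 (by omega) (by omega)]; exact hdp2
              · rw [c4v k h1 (by omega), c4v (k + 1) (by omega) h2]; exact hcbadj k
              · rw [c4v (ℓ - 2) (by omega) (by omega), show ℓ - 2 + 1 = ℓ - 1 from by omega,
                  c4vl1]
                exact hap.symm
              · rw [c4vl1, show ℓ - 1 + 1 = ℓ from by omega, c4vl]
                exact hz'adj
            have hclose4 : G.Adj (c4 ℓ) (c4 0) := by
              rw [c4vl, c4v0]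
              exact hC.cliqueAdj hz'm' hzm' hz'z
            have hs14 : ¬ G.Adj (c4 (ℓ - 1)) (c4 0) := by
              rw [c4vl1, c4v0]
              exact fun h => hza h.symm
            have hs24 : ¬ G.Adj (c4 ℓ) (c4 1) := by
              rw [c4vl, c4v1]; exact hz'd
            exact evenHole_absurd heven
              (hC.shape2 i c4 hc4 hadj4 hclose4 hs14 hs24) (hodd.add_one)
      · -- pan at a on H1
        have hane : a ≠ ρ := by rintro rfl; exact nab hρb
        refine hC.pan_shape1 hpan H1 hc1 (m := ℓ - 1) (by omega)
          (by rw [hpred i]; exact ha) (k₀ := ℓ - 1) (by omega) ?_ ?_ ?_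
        · rw [c1l]; exact hC.cliqueAdj ha hρm hane
        · rw [c1l]; exact Ne.symm hane
        · intro k hk hadjk
          rcases hC.bagIndex (m := ℓ - 1) (by omega) (by rw [hpred i]; exact ha)
            hk (hc1 k hk) hadjk with h | h | h
          · exact h
          · exfalso
            rw [show ℓ - 1 + 1 = ℓ from by omega, Nat.mod_self] at h
            rw [h, c1v 0 (by omega), hcb0] at hadjk
            exact nab hadjk
          · exfalso
            rw [show ℓ - 1 + ℓ - 1 = ℓ + (ℓ - 2) from by omega, Nat.add_mod_left,
              Nat.mod_eq_of_lt (by omega)] at h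
            rw [h, c1v (ℓ - 2) (by omega)] at hadjk
            exact hap hadjk
    · -- pan at d on H1
      refine hC.pan_shape1 hpan H1 hc1 (m := 1) (by omega)
        (by rw [hcast1]; exact hd) (k₀ := 1) (by omega) ?_ ?_ ?_
      · rw [c1v 1 (by omega)]
        exact hC.cliqueAdj hd hp1m (Ne.symm hd_p1)
      · rw [c1v 1 (by omega)]; exact hd_p1
      · intro k hk hadjk
        rcases hC.bagIndex (m := 1) (by omega) (by rw [hcast1]; exact hd)
          hk (hc1 k hk) hadjk with h | h | h
        · exact h
        · exfalso
          rw [Nat.mod_eq_of_lt (by omega)] at h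
          have h2 : k = 2 := by omega
          rw [h2, c1v 2 (by omega)] at hadjk
          exact hdp2 hadjk
        · exfalso
          rw [show 1 + ℓ - 1 = ℓ from by omega, Nat.mod_self] at h
          rw [h, c1v 0 (by omega), hcb0] at hadjk
          exact nbd hadjk.symm
  · -- case (ii) : even hole M4
    push_neg at hcase
    obtain ⟨ρ0, hρ0m, hρ0adj⟩ := hC.hnext (i + ((ℓ - 2 : ℕ) : ZMod ℓ)) (cb (ℓ - 2))
      (hcbm (ℓ - 2))
    have hρ0m' : ρ0 ∈ B (i - 1) := by
      have e : i + ((ℓ - 2 : ℕ) : ZMod ℓ) + 1 = i - 1 := by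
        rw [hC.cast_sub 2 (by omega)]; ring
      rwa [e] at hρ0m
    have hnρ0b : ¬ G.Adj ρ0 b := hcase ρ0 hρ0m' hρ0adj.symm
    have hna' : ¬ G.Adj a' (cb (ℓ - 2)) := fun h => hcase a' ha'm h ha'adj.symm
    have hneq : ρ0 ≠ a' := by rintro rfl; exact hnρ0b ha'adj.symm
    set c5 : ℕ → V := fun k => if k = 0 then a' else if k = ℓ then ρ0 else cb (k - 1) with hc5def
    have c5v0 : c5 0 = a' := by simp only [hc5def]; split_ifs <;> first | rfl | (exact False.elim ‹False›) | (exfalso; omega)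
    have c5vl : c5 ℓ = ρ0 := by simp only [hc5def]; split_ifs <;> first | rfl | (exact False.elim ‹False›) | (exfalso; omega)
    have c5v : ∀ k, 1 ≤ k → k ≤ ℓ - 1 → c5 k = cb (k - 1) := by
      intro k h1 h2
      simp only [hc5def]; split_ifs <;> first | rfl | (exact False.elim ‹False›) | (exfalso; omega)
    have hc5 : ∀ k, k ≤ ℓ → c5 k ∈ B ((i - 1) + (k : ZMod ℓ)) := by
      intro k hk
      have h4 : k = 0 ∨ (1 ≤ k ∧ k ≤ ℓ - 1) ∨ k = ℓ := by omega
      rcases h4 with rfl | ⟨h1, h2⟩ | rfl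
      · rw [c5v0]; simpa using ha'm
      · rw [c5v k h1 h2]
        have := hcbm (k - 1)
        rwa [show i + ((k - 1 : ℕ) : ZMod ℓ) = (i - 1) + ((k : ℕ) : ZMod ℓ) from by
          rw [show (k : ℕ) = (k - 1) + 1 from by omega]
          push_cast
          ring] at this
      · rw [c5vl, ZMod.natCast_self, add_zero]; exact hρ0m'
    have hadj5 : ∀ k, k < ℓ → G.Adj (c5 k) (c5 (k + 1)) := by
      intro k hk
      have h4 : k = 0 ∨ (1 ≤ k ∧ k ≤ ℓ - 2) ∨ k = ℓ - 1 := by omega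
      rcases h4 with rfl | ⟨h1, h2⟩ | rfl
      · rw [c5v0, c5v 1 (by omega) (by omega), show (1 : ℕ) - 1 = 0 from rfl, hcb0]
        exact ha'adj.symm
      · rw [c5v k h1 (by omega), c5v (k + 1) (by omega) (by omega),
          show k + 1 - 1 = (k - 1) + 1 from by omega]
        exact hcbadj (k - 1)
      · rw [c5v (ℓ - 1) (by omega) (by omega), show ℓ - 1 + 1 = ℓ from by omega, c5vl,
          show ℓ - 1 - 1 = ℓ - 2 from by omega]
        exact hρ0adj
    have hclose5 : G.Adj (c5 ℓ) (c5 0) := by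
      rw [c5vl, c5v0]
      exact hC.cliqueAdj hρ0m' ha'm hneq
    have hs15 : ¬ G.Adj (c5 (ℓ - 1)) (c5 0) := by
      rw [c5v (ℓ - 1) (by omega) (by omega), c5v0, show ℓ - 1 - 1 = ℓ - 2 from by omega]
      exact fun h => hna' h.symm
    have hs25 : ¬ G.Adj (c5 ℓ) (c5 1) := by
      rw [c5vl, c5v 1 (by omega) (by omega), show (1 : ℕ) - 1 = 0 from rfl, hcb0]
      exact hnρ0b
    exact evenHole_absurd heven
      (hC.shape2 (i - 1) c5 hc5 hadj5 hclose5 hs15 hs25) (hodd.add_one)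

/-- Case III: an induced P4 a-c-b-d across three bags is impossible. -/
theorem Ctx.caseIII (hC : Ctx G ℓ B) (hpan : ¬ HasInducedPan G) (heven : ¬ HasEvenHole G)
    (hodd : Odd ℓ) {i : ZMod ℓ} {a b c d : V}
    (ha : a ∈ B (i - 1)) (hb : b ∈ B i) (hcm : c ∈ B i) (hd : d ∈ B (i + 1))
    (nab : ¬ G.Adj a b) (ncd : ¬ G.Adj c d) (hca : G.Adj c a) (hbd : G.Adj b d) : False := by
  have hl5 := hC.hl
  haveI := hC.nz
  have hpred : ∀ j : ZMod ℓ, j + ((ℓ - 1 : ℕ) : ZMod ℓ) = j - 1 := by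
    intro j; rw [hC.cast_sub 1 (by omega)]; ring
  have hbc : b ≠ c := by rintro rfl; exact ncd hbd
  obtain ⟨ct, hct0, hctm, hctadj⟩ := hC.exists_chain (i + 1) hd
  obtain ⟨a2, ha2m, ha2adj⟩ := hC.hprev i b hb
  have haa2 : a ≠ a2 := by rintro rfl; exact nab ha2adj.symm
  have hctm' : ∀ k : ℕ, 1 ≤ k → ct (k - 1) ∈ B (i + (k : ZMod ℓ)) := by
    intro k hk
    have := hctm (k - 1)
    rwa [show (i + 1) + ((k - 1 : ℕ) : ZMod ℓ) = i + ((k : ℕ) : ZMod ℓ) from by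
      rw [show (k : ℕ) = (k - 1) + 1 from by omega]
      push_cast; ring] at this
  -- the common even hole once `a` is adjacent to the chain's end
  have evenC : G.Adj a (ct (ℓ - 3)) → False := by
    intro h4
    set c6 : ℕ → V := fun k =>
      if k = 0 then b else if k = ℓ - 1 then a else if k = ℓ then c else ct (k - 1) with hc6def
    have c6v0 : c6 0 = b := by
      simp only [hc6def]; split_ifs <;> first | rfl | (exact False.elim ‹False›) | (exfalso; omega)
    have c6va : c6 (ℓ - 1) = a := by
      simp only [hc6def]; split_ifs <;> first | rfl | (exact False.elim ‹False›) | (exfalso; omega)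
    have c6vc : c6 ℓ = c := by
      simp only [hc6def]; split_ifs <;> first | rfl | (exact False.elim ‹False›) | (exfalso; omega)
    have c6v : ∀ k, 1 ≤ k → k ≤ ℓ - 2 → c6 k = ct (k - 1) := by
      intro k h1 h2
      simp only [hc6def]; split_ifs <;> first | rfl | (exact False.elim ‹False›) | (exfalso; omega)
    have hc6 : ∀ k, k ≤ ℓ → c6 k ∈ B (i + (k : ZMod ℓ)) := by
      intro k hk
      have h5 : k = 0 ∨ (1 ≤ k ∧ k ≤ ℓ - 2) ∨ k = ℓ - 1 ∨ k = ℓ := by omega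
      rcases h5 with rfl | ⟨h5a, h5b⟩ | rfl | rfl
      · rw [c6v0]; simpa using hb
      · rw [c6v k h5a h5b]; exact hctm' k h5a
      · rw [c6va, hpred i]; exact ha
      · rw [c6vc, ZMod.natCast_self, add_zero]; exact hcm
    have hadj6 : ∀ k, k < ℓ → G.Adj (c6 k) (c6 (k + 1)) := by
      intro k hk
      have h5 : k = 0 ∨ (1 ≤ k ∧ k ≤ ℓ - 3) ∨ k = ℓ - 2 ∨ k = ℓ - 1 := by omega
      rcases h5 with rfl | ⟨h5a, h5b⟩ | rfl | rfl
      · rw [c6v0, c6v 1 (by omega) (by omega), show (1 : ℕ) - 1 = 0 from rfl, hct0]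
        exact hbd
      · rw [c6v k h5a (by omega), c6v (k + 1) (by omega) (by omega),
          show k + 1 - 1 = (k - 1) + 1 from by omega]
        exact hctadj (k - 1)
      · rw [c6v (ℓ - 2) (by omega) (by omega), show ℓ - 2 + 1 = ℓ - 1 from by omega, c6va,
          show ℓ - 2 - 1 = ℓ - 3 from by omega]
        exact h4.symm
      · rw [c6va, show ℓ - 1 + 1 = ℓ from by omega, c6vc]
        exact hca.symm
    have hclose6 : G.Adj (c6 ℓ) (c6 0) := by
      rw [c6vc, c6v0]
      exact hC.cliqueAdj hcm hb (Ne.symm hbc)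
    have hs16 : ¬ G.Adj (c6 (ℓ - 1)) (c6 0) := by
      rw [c6va, c6v0]; exact nab
    have hs26 : ¬ G.Adj (c6 ℓ) (c6 1) := by
      rw [c6vc, c6v 1 (by omega) (by omega), show (1 : ℕ) - 1 = 0 from rfl, hct0]
      exact ncd
    exact evenHole_absurd heven
      (hC.shape2 i c6 hc6 hadj6 hclose6 hs16 hs26) (hodd.add_one)
  by_cases h1 : G.Adj a2 (ct (ℓ - 3))
  · -- hole H₂ through a2, then pan at a (or evenC)
    by_cases h4 : G.Adj a (ct (ℓ - 3))
    · exact evenC h4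
    · set c7 : ℕ → V := fun k =>
        if k = 0 then b else if k = ℓ - 1 then a2 else ct (k - 1) with hc7def
      have c7v0 : c7 0 = b := by
        simp only [hc7def]; split_ifs <;> first | rfl | (exact False.elim ‹False›) | (exfalso; omega)
      have c7va : c7 (ℓ - 1) = a2 := by
        simp only [hc7def]; split_ifs <;> first | rfl | (exact False.elim ‹False›) | (exfalso; omega)
      have c7v : ∀ k, 1 ≤ k → k ≤ ℓ - 2 → c7 k = ct (k - 1) := by
        intro k hk1 hk2
        simp only [hc7def]; split_ifs <;> first | rfl | (exact False.elim ‹False›) | (exfalso; omega)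
      have hc7 : ∀ k, k < ℓ → c7 k ∈ B (i + (k : ZMod ℓ)) := by
        intro k hk
        have h5 : k = 0 ∨ (1 ≤ k ∧ k ≤ ℓ - 2) ∨ k = ℓ - 1 := by omega
        rcases h5 with rfl | ⟨h5a, h5b⟩ | rfl
        · rw [c7v0]; simpa using hb
        · rw [c7v k h5a h5b]; exact hctm' k h5a
        · rw [c7va, hpred i]; exact ha2m
      have hadj7 : ∀ k, k + 1 < ℓ → G.Adj (c7 k) (c7 (k + 1)) := by
        intro k hk
        have h5 : k = 0 ∨ (1 ≤ k ∧ k ≤ ℓ - 3) ∨ k = ℓ - 2 := by omega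
        rcases h5 with rfl | ⟨h5a, h5b⟩ | rfl
        · rw [c7v0, c7v 1 (by omega) (by omega), show (1 : ℕ) - 1 = 0 from rfl, hct0]
          exact hbd
        · rw [c7v k h5a (by omega), c7v (k + 1) (by omega) (by omega),
            show k + 1 - 1 = (k - 1) + 1 from by omega]
          exact hctadj (k - 1)
        · rw [c7v (ℓ - 2) (by omega) (by omega), show ℓ - 2 + 1 = ℓ - 1 from by omega, c7va,
            show ℓ - 2 - 1 = ℓ - 3 from by omega]
          exact h1.symm
      have hclose7 : G.Adj (c7 (ℓ - 1)) (c7 0) := by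
        rw [c7va, c7v0]; exact ha2adj.symm
      have H7 : IsHole G ℓ (fun t => c7 t.val) := hC.shape1 i c7 hc7 hadj7 hclose7
      refine hC.pan_shape1 hpan H7 hc7 (m := ℓ - 1) (by omega)
        (by rw [hpred i]; exact ha) (k₀ := ℓ - 1) (by omega) ?_ ?_ ?_
      · rw [c7va]; exact hC.cliqueAdj ha ha2m haa2
      · rw [c7va]; exact Ne.symm haa2
      · intro k hk hadjk
        rcases hC.bagIndex (m := ℓ - 1) (by omega) (by rw [hpred i]; exact ha)
          hk (hc7 k hk) hadjk with h | h | h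
        · exact h
        · exfalso
          rw [show ℓ - 1 + 1 = ℓ from by omega, Nat.mod_self] at h
          rw [h, c7v0] at hadjk
          exact nab hadjk
        · exfalso
          rw [show ℓ - 1 + ℓ - 1 = ℓ + (ℓ - 2) from by omega, Nat.add_mod_left,
            Nat.mod_eq_of_lt (by omega)] at h
          rw [h, c7v (ℓ - 2) (by omega) (by omega), show ℓ - 2 - 1 = ℓ - 3 from by omega]
            at hadjk
          exact h4 hadjk
  · -- a2 is not adjacent to the chain end : get ρ
    obtain ⟨ρ, hρm, hρadj⟩ := hC.hnext ((i + 1) + ((ℓ - 3 : ℕ) : ZMod ℓ)) (ct (ℓ - 3))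
      (hctm (ℓ - 3))
    have hρm' : ρ ∈ B (i - 1) := by
      have e : (i + 1) + ((ℓ - 3 : ℕ) : ZMod ℓ) + 1 = i - 1 := by
        rw [hC.cast_sub 3 (by omega)]; ring
      rwa [e] at hρm
    have hρa2 : ρ ≠ a2 := by rintro rfl; exact h1 hρadj.symm
    by_cases h3 : G.Adj ρ b
    · -- hole H₃ through ρ, then pan at a (or evenC)
      by_cases h4 : G.Adj a (ct (ℓ - 3))
      · exact evenC h4
      · have haρ : a ≠ ρ := by rintro rfl; exact nab h3
        set c9 : ℕ → V := fun k =>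
          if k = 0 then b else if k = ℓ - 1 then ρ else ct (k - 1) with hc9def
        have c9v0 : c9 0 = b := by
          simp only [hc9def]; split_ifs <;> first | rfl | (exact False.elim ‹False›) | (exfalso; omega)
        have c9va : c9 (ℓ - 1) = ρ := by
          simp only [hc9def]; split_ifs <;> first | rfl | (exact False.elim ‹False›) | (exfalso; omega)
        have c9v : ∀ k, 1 ≤ k → k ≤ ℓ - 2 → c9 k = ct (k - 1) := by
          intro k hk1 hk2
          simp only [hc9def]; split_ifs <;> first | rfl | (exact False.elim ‹False›) | (exfalso; omega)
        have hc9 : ∀ k, k < ℓ → c9 k ∈ B (i + (k : ZMod ℓ)) := by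
          intro k hk
          have h5 : k = 0 ∨ (1 ≤ k ∧ k ≤ ℓ - 2) ∨ k = ℓ - 1 := by omega
          rcases h5 with rfl | ⟨h5a, h5b⟩ | rfl
          · rw [c9v0]; simpa using hb
          · rw [c9v k h5a h5b]; exact hctm' k h5a
          · rw [c9va, hpred i]; exact hρm'
        have hadj9 : ∀ k, k + 1 < ℓ → G.Adj (c9 k) (c9 (k + 1)) := by
          intro k hk
          have h5 : k = 0 ∨ (1 ≤ k ∧ k ≤ ℓ - 3) ∨ k = ℓ - 2 := by omega
          rcases h5 with rfl | ⟨h5a, h5b⟩ | rfl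
          · rw [c9v0, c9v 1 (by omega) (by omega), show (1 : ℕ) - 1 = 0 from rfl, hct0]
            exact hbd
          · rw [c9v k h5a (by omega), c9v (k + 1) (by omega) (by omega),
              show k + 1 - 1 = (k - 1) + 1 from by omega]
            exact hctadj (k - 1)
          · rw [c9v (ℓ - 2) (by omega) (by omega), show ℓ - 2 + 1 = ℓ - 1 from by omega, c9va,
              show ℓ - 2 - 1 = ℓ - 3 from by omega]
            exact hρadj
        have hclose9 : G.Adj (c9 (ℓ - 1)) (c9 0) := by
          rw [c9va, c9v0]; exact h3
        have H9 : IsHole G ℓ (fun t => c9 t.val) := hC.shape1 i c9 hc9 hadj9 hclose9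
        refine hC.pan_shape1 hpan H9 hc9 (m := ℓ - 1) (by omega)
          (by rw [hpred i]; exact ha) (k₀ := ℓ - 1) (by omega) ?_ ?_ ?_
        · rw [c9va]; exact hC.cliqueAdj ha hρm' haρ
        · rw [c9va]; exact Ne.symm haρ
        · intro k hk hadjk
          rcases hC.bagIndex (m := ℓ - 1) (by omega) (by rw [hpred i]; exact ha)
            hk (hc9 k hk) hadjk with h | h | h
          · exact h
          · exfalso
            rw [show ℓ - 1 + 1 = ℓ from by omega, Nat.mod_self] at h
            rw [h, c9v0] at hadjk
            exact nab hadjk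
          · exfalso
            rw [show ℓ - 1 + ℓ - 1 = ℓ + (ℓ - 2) from by omega, Nat.add_mod_left,
              Nat.mod_eq_of_lt (by omega)] at h
            rw [h, c9v (ℓ - 2) (by omega) (by omega), show ℓ - 2 - 1 = ℓ - 3 from by omega]
              at hadjk
            exact h4 hadjk
    · -- even hole M : (a2, b, d, ct 1, ..., ct (ℓ-3), ρ)
      set c8 : ℕ → V := fun k =>
        if k = 0 then a2 else if k = 1 then b else if k = ℓ then ρ else ct (k - 2) with hc8def
      have c8v0 : c8 0 = a2 := by
        simp only [hc8def]; split_ifs <;> first | rfl | (exact False.elim ‹False›) | (exfalso; omega)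
      have c8v1 : c8 1 = b := by
        simp only [hc8def]; split_ifs <;> first | rfl | (exact False.elim ‹False›) | (exfalso; omega)
      have c8vl : c8 ℓ = ρ := by
        simp only [hc8def]; split_ifs <;> first | rfl | (exact False.elim ‹False›) | (exfalso; omega)
      have c8v : ∀ k, 2 ≤ k → k ≤ ℓ - 1 → c8 k = ct (k - 2) := by
        intro k hk1 hk2
        simp only [hc8def]; split_ifs <;> first | rfl | (exact False.elim ‹False›) | (exfalso; omega)
      have hctm2 : ∀ k : ℕ, 2 ≤ k → ct (k - 2) ∈ B ((i - 1) + (k : ZMod ℓ)) := by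
        intro k hk
        have := hctm (k - 2)
        rwa [show (i + 1) + ((k - 2 : ℕ) : ZMod ℓ) = (i - 1) + ((k : ℕ) : ZMod ℓ) from by
          rw [show (k : ℕ) = (k - 2) + 2 from by omega]
          push_cast; ring] at this
      have hc8 : ∀ k, k ≤ ℓ → c8 k ∈ B ((i - 1) + (k : ZMod ℓ)) := by
        intro k hk
        have h5 : k = 0 ∨ k = 1 ∨ (2 ≤ k ∧ k ≤ ℓ - 1) ∨ k = ℓ := by omega
        rcases h5 with rfl | rfl | ⟨h5a, h5b⟩ | rfl
        · rw [c8v0]; simpa using ha2m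
        · rw [c8v1, show ((1 : ℕ) : ZMod ℓ) = 1 from by push_cast; ring, sub_add_cancel]
          exact hb
        · rw [c8v k h5a h5b]; exact hctm2 k h5a
        · rw [c8vl, ZMod.natCast_self, add_zero]; exact hρm'
      have hadj8 : ∀ k, k < ℓ → G.Adj (c8 k) (c8 (k + 1)) := by
        intro k hk
        have h5 : k = 0 ∨ k = 1 ∨ (2 ≤ k ∧ k ≤ ℓ - 2) ∨ k = ℓ - 1 := by omega
        rcases h5 with rfl | rfl | ⟨h5a, h5b⟩ | rfl
        · rw [c8v0, c8v1]; exact ha2adj.symm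
        · rw [c8v1, c8v 2 (by omega) (by omega), show (2 : ℕ) - 2 = 0 from rfl, hct0]
          exact hbd
        · rw [c8v k h5a (by omega), c8v (k + 1) (by omega) (by omega),
            show k + 1 - 2 = (k - 2) + 1 from by omega]
          exact hctadj (k - 2)
        · rw [c8v (ℓ - 1) (by omega) (by omega), show ℓ - 1 + 1 = ℓ from by omega, c8vl,
            show ℓ - 1 - 2 = ℓ - 3 from by omega]
          exact hρadj
      have hclose8 : G.Adj (c8 ℓ) (c8 0) := by
        rw [c8vl, c8v0]
        exact hC.cliqueAdj hρm' ha2m hρa2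
      have hs18 : ¬ G.Adj (c8 (ℓ - 1)) (c8 0) := by
        rw [c8v (ℓ - 1) (by omega) (by omega), c8v0, show ℓ - 1 - 2 = ℓ - 3 from by omega]
        exact fun h => h1 h.symm
      have hs28 : ¬ G.Adj (c8 ℓ) (c8 1) := by
        rw [c8vl, c8v1]; exact h3
      exact evenHole_absurd heven
        (hC.shape2 (i - 1) c8 hc8 hadj8 hclose8 hs18 hs28) (hodd.add_one)

theorem Ctx.cross_pair (hC : Ctx G ℓ B) {j j' : ZMod ℓ}
    (hne : ¬ G.IsClique (B j ∪ B j')) :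
    ∃ p ∈ B j, ∃ q ∈ B j', ¬ G.Adj p q := by
  by_contra hcon
  push_neg at hcon
  apply hne
  intro x hx y hy hxy
  rcases hx with hx | hx <;> rcases hy with hy | hy
  · exact hC.cliqueAdj hx hy hxy
  · exact hcon x hx y hy
  · exact (hcon y hy x hx).symm
  · exact hC.cliqueAdj hx hy hxy

end Stmt9Aux

def IsBuoy {V : Type*} (G : SimpleGraph V) (ℓ : ℕ) (B : ZMod ℓ → Set V) : Prop :=
  5 ≤ ℓ ∧
  (∀ i, (B i).Nonempty) ∧
  (∀ i, G.IsClique (B i)) ∧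
  (Pairwise fun i j => Disjoint (B i) (B j)) ∧
  (∀ i, ∀ v ∈ B i, ∃ u ∈ B (i + 1), G.Adj v u) ∧
  (∀ i, ∀ v ∈ B i, ∃ u ∈ B (i - 1), G.Adj v u) ∧
  (∀ i j : ZMod ℓ, j ≠ i → j ≠ i + 1 → j ≠ i - 1 →
    ∀ v ∈ B i, ∀ u ∈ B j, ¬ G.Adj v u)

theorem stmt_9 {V : Type*} (G : SimpleGraph V)
    (hpan : ¬ HasInducedPan G) (heven : ¬ HasEvenHole G)
    (ℓ : ℕ) (B : ZMod ℓ → Set V) (hB : IsBuoy G ℓ B) :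
    ∀ i : ZMod ℓ, G.IsClique (B (i - 1) ∪ B i) ∨ G.IsClique (B i ∪ B (i + 1)) := by
  have hC : Stmt9Aux.Ctx G ℓ B :=
    ⟨hB.1, hB.2.1, hB.2.2.1, hB.2.2.2.1, hB.2.2.2.2.1, hB.2.2.2.2.2.1, hB.2.2.2.2.2.2⟩
  intro i
  by_contra hcon
  push_neg at hcon
  obtain ⟨h1, h2⟩ := hcon
  rcases Nat.even_or_odd ℓ with he | ho
  · exact (hC.evenCase heven he).elim
  · obtain ⟨a, ha, b, hb, nab⟩ := hC.cross_pair h1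
    obtain ⟨c, hcm, d, hd, ncd⟩ := hC.cross_pair h2
    by_cases hbd : G.Adj b d
    · by_cases hca : G.Adj c a
      · exact (hC.caseIII hpan heven ho ha hb hcm hd nab ncd hca hbd).elim
      · exact (hC.lemmaV hpan heven ho ha hcm hd (fun h => hca h.symm) ncd).elim
    · exact (hC.lemmaV hpan heven ho ha hb hd nab hbd).elim
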